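/- Let f : ℝ → ℝ be continuous with |f(x)| ≤ a·cosh(b·x) for all x (a > 0, b ∈ ℝ), fix L > 0 and λ > 0, and for a probability measure ρ supported in [0, L] define F_ρ : [0, L] → ℝ by F_ρ(x) = Σ_{k=0}^∞ (e^{−λ} λ^k / (k+1)!) · ∫ f d(δ_x ∗ ρ^{∗k}). If ρ_n and ρ are probability measures supported in [0, L] and ρ_n → ρ weakly (∫ φ dρ_n → ∫ φ dρ for every bounded continuous φ), then F_{ρ_n} → F_ρ uniformly on [0, L]. Moreover the scalar quantities G_ρ = Σ_{k=0}^∞ (e^{−λ} λ^k / (k+1)!) · ∫ f d(ρ^{∗(k+1)}) satisfy G_{ρ_n} → G_ρ. -/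

import Mathlib

open MeasureTheory Filter

/-- The `n`-fold convolution power of a measure on `ℝ`, with `ρ^{∗0} = δ₀`. -/
noncomputable def convPow (ρ : Measure ℝ) : ℕ → Measure ℝ
  | 0 => Measure.dirac 0
  | n + 1 => (convPow ρ n).conv ρ

/-- The mean real fitness of a genotype of activity `x`:
`F_ρ(x) = Σ_{k=0}^∞ (e^{−λ} λ^k / (k+1)!) · ∫ f d(δ_x ∗ ρ^{∗k})`. -/
noncomputable def meanFitnessAt (f : ℝ → ℝ) (l : ℝ) (ρ : Measure ℝ) (x : ℝ) : ℝ :=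
  ∑' k : ℕ, Real.exp (-l) * l ^ k / (k + 1).factorial *
    ∫ y, f y ∂((Measure.dirac x).conv (convPow ρ k))

/-- The population mean real fitness:
`G_ρ = Σ_{k=0}^∞ (e^{−λ} λ^k / (k+1)!) · ∫ f d(ρ^{∗(k+1)})`. -/
noncomputable def meanFitness (f : ℝ → ℝ) (l : ℝ) (ρ : Measure ℝ) : ℝ :=
  ∑' k : ℕ, Real.exp (-l) * l ^ k / (k + 1).factorial *
    ∫ y, f y ∂(convPow ρ (k + 1))

/-- Weak convergence: convergence of the integrals against every bounded
continuous test function. -/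
def WeakTendsto (ρs : ℕ → Measure ℝ) (ρ : Measure ℝ) : Prop :=
  ∀ φ : ℝ → ℝ, Continuous φ → (∃ C : ℝ, ∀ x, |φ x| ≤ C) →
    Tendsto (fun n => ∫ x, φ x ∂(ρs n)) atTop (nhds (∫ x, φ x ∂ρ))

open Set Polynomial

namespace MFAux

lemma conv_def (μ ν : Measure ℝ) :
    μ.conv ν = Measure.map (fun p : ℝ × ℝ => p.1 + p.2) (μ.prod ν) := rfl

lemma ae_mem_of_null_compl {μ : Measure ℝ} {s : Set ℝ} (h : μ sᶜ = 0) :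
    ∀ᵐ y ∂μ, y ∈ s := by
  rw [ae_iff]; exact h

lemma ae_fst_mem {μ ν : Measure ℝ} [SFinite μ] [SFinite ν] {s : Set ℝ}
    (h : μ sᶜ = 0) : ∀ᵐ p : ℝ × ℝ ∂(μ.prod ν), p.1 ∈ s := by
  rw [ae_iff]
  have he : {p : ℝ × ℝ | ¬ p.1 ∈ s} = sᶜ ×ˢ Set.univ := by ext p; simp
  rw [he, Measure.prod_prod, h, zero_mul]

lemma ae_snd_mem {μ ν : Measure ℝ} [SFinite μ] [SFinite ν] {s : Set ℝ}
    (h : ν sᶜ = 0) : ∀ᵐ p : ℝ × ℝ ∂(μ.prod ν), p.2 ∈ s := by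
  rw [ae_iff]
  have he : {p : ℝ × ℝ | ¬ p.2 ∈ s} = Set.univ ×ˢ sᶜ := by ext p; simp
  rw [he, Measure.prod_prod, h, mul_zero]

lemma integrable_of_cont_bdd {μ : Measure ℝ} [IsFiniteMeasure μ] {g : ℝ → ℝ}
    (hg : Continuous g) {C : ℝ} (h : ∀ᵐ y ∂μ, |g y| ≤ C) : Integrable g μ :=
  Integrable.mono' (integrable_const C) hg.aestronglyMeasurable
    (by simpa [Real.norm_eq_abs] using h)

lemma abs_integral_le {μ : Measure ℝ} [IsProbabilityMeasure μ] {g : ℝ → ℝ} {C : ℝ}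
    (h : ∀ᵐ y ∂μ, |g y| ≤ C) : |∫ y, g y ∂μ| ≤ C := by
  have := norm_integral_le_of_norm_le_const (μ := μ) (f := g) (C := C)
    (by simpa [Real.norm_eq_abs] using h)
  simpa [Real.norm_eq_abs, measure_univ] using this

lemma convPow_prob (μ : Measure ℝ) [IsProbabilityMeasure μ] :
    ∀ k, IsProbabilityMeasure (convPow μ k)
  | 0 => by rw [convPow]; infer_instance
  | k + 1 => by
      rw [convPow]
      haveI := convPow_prob μ k
      infer_instance

lemma conv_supp {μ ν : Measure ℝ} [SFinite μ] [SFinite ν] {A B : ℝ}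
    (hμ : μ (Icc 0 A)ᶜ = 0) (hν : ν (Icc 0 B)ᶜ = 0) :
    (μ.conv ν) (Icc 0 (A + B))ᶜ = 0 := by
  rw [conv_def, Measure.map_apply (by fun_prop) measurableSet_Icc.compl]
  have hsub : (Icc 0 A ×ˢ Icc 0 B : Set (ℝ × ℝ)) ⊆
      (fun p : ℝ × ℝ => p.1 + p.2) ⁻¹' Icc 0 (A + B) := by
    rintro ⟨y, z⟩ ⟨⟨hy0, hyA⟩, ⟨hz0, hzB⟩⟩
    exact ⟨add_nonneg hy0 hz0, add_le_add hyA hzB⟩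
  have h2 : (fun p : ℝ × ℝ => p.1 + p.2) ⁻¹' (Icc 0 (A + B))ᶜ ⊆
      (Icc 0 A ×ˢ Icc 0 B : Set (ℝ × ℝ))ᶜ := fun p hp hm => hp (hsub hm)
  have h3 : (μ.prod ν) ((Icc 0 A ×ˢ Icc 0 B : Set (ℝ × ℝ))ᶜ) = 0 := by
    have hae : ∀ᵐ p : ℝ × ℝ ∂(μ.prod ν), p ∈ (Icc 0 A ×ˢ Icc 0 B : Set (ℝ × ℝ)) := by
      filter_upwards [ae_fst_mem (ν := ν) hμ, ae_snd_mem (μ := μ) hν] with p h1 h2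
      exact ⟨h1, h2⟩
    exact mem_ae_iff.mp hae
  exact le_antisymm (h3 ▸ measure_mono h2) zero_le

lemma integrable_addfun {μ ν : Measure ℝ} [IsProbabilityMeasure μ] [IsProbabilityMeasure ν]
    {A B : ℝ} (hμ : μ (Icc 0 A)ᶜ = 0) (hν : ν (Icc 0 B)ᶜ = 0) {g : ℝ → ℝ}
    (hg : Continuous g) : Integrable (fun p : ℝ × ℝ => g (p.1 + p.2)) (μ.prod ν) := by
  obtain ⟨C, hC⟩ := (isCompact_Icc (a := (0:ℝ)) (b := A + B)).exists_bound_of_continuousOn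
    hg.continuousOn
  refine Integrable.mono' (integrable_const C) ((hg.comp (continuous_fst.add continuous_snd)).aestronglyMeasurable) ?_
  filter_upwards [ae_fst_mem (ν := ν) hμ, ae_snd_mem (μ := μ) hν] with p h1 h2
  exact hC _ ⟨add_nonneg h1.1 h2.1, add_le_add h1.2 h2.2⟩

lemma integral_conv {μ ν : Measure ℝ} [IsProbabilityMeasure μ] [IsProbabilityMeasure ν]
    {A B : ℝ} (hμ : μ (Icc 0 A)ᶜ = 0) (hν : ν (Icc 0 B)ᶜ = 0) {g : ℝ → ℝ}
    (hg : Continuous g) :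
    ∫ t, g t ∂(μ.conv ν) = ∫ y, ∫ z, g (y + z) ∂ν ∂μ := by
  rw [conv_def, integral_map (by fun_prop) hg.aestronglyMeasurable]
  exact integral_prod _ (integrable_addfun hμ hν hg)

lemma integral_dirac_conv {ν : Measure ℝ} [SFinite ν] (x : ℝ) {g : ℝ → ℝ}
    (hg : Continuous g) :
    ∫ t, g t ∂((Measure.dirac x).conv ν) = ∫ y, g (x + y) ∂ν := by
  rw [conv_def, Measure.dirac_prod, Measure.map_map (by fun_prop) (by fun_prop)]
  rw [show ((fun p : ℝ × ℝ => p.1 + p.2) ∘ (Prod.mk x)) = fun y => x + y from rfl]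
  rw [integral_map (by fun_prop) hg.aestronglyMeasurable]

noncomputable def mom (μ : Measure ℝ) (j : ℕ) : ℝ := ∫ y, y ^ j ∂μ

lemma integrable_pow {μ : Measure ℝ} [IsProbabilityMeasure μ] {A : ℝ}
    (hμ : μ (Icc 0 A)ᶜ = 0) (j : ℕ) : Integrable (fun y : ℝ => y ^ j) μ := by
  obtain ⟨C, hC⟩ := (isCompact_Icc (a := (0:ℝ)) (b := A)).exists_bound_of_continuousOn
    (continuous_pow j).continuousOn
  apply integrable_of_cont_bdd (continuous_pow j)
  filter_upwards [ae_mem_of_null_compl hμ] with y hy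
  exact hC y hy

lemma mom_conv {μ ν : Measure ℝ} [IsProbabilityMeasure μ] [IsProbabilityMeasure ν]
    {A B : ℝ} (hμ : μ (Icc 0 A)ᶜ = 0) (hν : ν (Icc 0 B)ᶜ = 0) (j : ℕ) :
    mom (μ.conv ν) j =
      ∑ i ∈ Finset.range (j + 1), (j.choose i : ℝ) * mom μ i * mom ν (j - i) := by
  rw [mom, integral_conv hμ hν (continuous_pow j)]
  have h1 : ∀ y : ℝ, ∫ z, (y + z) ^ j ∂ν =
      ∑ i ∈ Finset.range (j + 1), (j.choose i : ℝ) * mom ν (j - i) * y ^ i := by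
    intro y
    have hz : ∀ z : ℝ, (y + z) ^ j =
        ∑ i ∈ Finset.range (j + 1), y ^ i * z ^ (j - i) * (j.choose i : ℝ) :=
      fun z => add_pow y z j
    simp_rw [hz]
    rw [integral_finset_sum _ (fun i _ =>
      ((integrable_pow hν (j - i)).const_mul (y ^ i)).mul_const _)]
    refine Finset.sum_congr rfl fun i _ => ?_
    rw [integral_mul_const, integral_const_mul]
    simp only [mom]
    ring
  simp_rw [h1]
  rw [integral_finset_sum _ (fun i _ =>
    ((integrable_pow hμ i).const_mul _))]
  refine Finset.sum_congr rfl fun i _ => ?_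
  rw [integral_const_mul]
  simp only [mom]
  ring

lemma convPow_supp {μ : Measure ℝ} [IsProbabilityMeasure μ] {L : ℝ}
    (hμ : μ (Icc 0 L)ᶜ = 0) :
    ∀ k : ℕ, (convPow μ k) (Icc 0 ((k : ℝ) * L))ᶜ = 0
  | 0 => by
      rw [convPow]
      rw [show ((0 : ℕ) : ℝ) * L = 0 by simp, Set.Icc_self,
        Measure.dirac_apply' _ (measurableSet_singleton (0:ℝ)).compl]
      simp
  | k + 1 => by
      rw [convPow]
      haveI := convPow_prob μ k
      have h := conv_supp (convPow_supp hμ k) hμ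
      have : ((k : ℝ) + 1) * L = (k : ℝ) * L + L := by ring
      rw [show (((k + 1 : ℕ) : ℝ)) * L = (k : ℝ) * L + L by push_cast; ring]
      exact h

lemma cosh_le_exp_abs (t : ℝ) : Real.cosh t ≤ Real.exp |t| := by
  rw [Real.cosh_eq]
  have h1 : Real.exp t ≤ Real.exp |t| := Real.exp_le_exp.mpr (le_abs_self t)
  have h2 : Real.exp (-t) ≤ Real.exp |t| := Real.exp_le_exp.mpr (neg_le_abs t)
  linarith

lemma integrable_shift {ν : Measure ℝ} [IsProbabilityMeasure ν] {A : ℝ}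
    (hν : ν (Icc 0 A)ᶜ = 0) {g : ℝ → ℝ} (hg : Continuous g) (x : ℝ) :
    Integrable (fun y => g (x + y)) ν := by
  obtain ⟨C, hC⟩ := (isCompact_Icc (a := x) (b := x + A)).exists_bound_of_continuousOn
    hg.continuousOn
  apply integrable_of_cont_bdd (hg.comp (continuous_const.add continuous_id))
  filter_upwards [ae_mem_of_null_compl hν] with y hy
  refine hC _ ⟨?_, ?_⟩ <;> simp only [Pi.add_apply, id_eq] <;> linarith [hy.1, hy.2]

lemma integral_f_bound {f : ℝ → ℝ} {a b : ℝ} (ha : 0 ≤ a)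
    (hbound : ∀ x, |f x| ≤ a * Real.cosh (b * x))
    {ν : Measure ℝ} [IsProbabilityMeasure ν] {A : ℝ} (hν : ν (Icc 0 A)ᶜ = 0)
    {x U : ℝ} (hx0 : 0 ≤ x) (hxU : x ≤ U) :
    |∫ y, f (x + y) ∂ν| ≤ a * Real.exp (|b| * (A + U)) := by
  apply abs_integral_le
  filter_upwards [ae_mem_of_null_compl hν] with y hy
  calc |f (x + y)| ≤ a * Real.cosh (b * (x + y)) := hbound _
    _ ≤ a * Real.exp (|b| * (A + U)) := by
        refine mul_le_mul_of_nonneg_left ?_ ha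
        refine le_trans (cosh_le_exp_abs _) (Real.exp_le_exp.mpr ?_)
        rw [abs_mul]
        refine mul_le_mul_of_nonneg_left ?_ (abs_nonneg b)
        rw [abs_of_nonneg (by linarith [hy.1])]
        linarith [hy.2]

lemma tendstoUniformlyOn_integral
    {μ : Measure ℝ} {μs : ℕ → Measure ℝ} [IsProbabilityMeasure μ]
    (hμs : ∀ n, IsProbabilityMeasure (μs n))
    {A L : ℝ} (hL : 0 < L)
    (hsupp : μ (Icc 0 A)ᶜ = 0) (hsupps : ∀ n, (μs n) (Icc 0 A)ᶜ = 0)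
    (hmom : ∀ j, Tendsto (fun n => mom (μs n) j) atTop (nhds (mom μ j)))
    {f : ℝ → ℝ} (hf : Continuous f) :
    TendstoUniformlyOn (fun n x => ∫ y, f (x + y) ∂(μs n))
      (fun x => ∫ y, f (x + y) ∂μ) atTop (Icc 0 L) := by
  rw [Metric.tendstoUniformlyOn_iff]
  intro ε hε
  obtain ⟨p, hp⟩ := exists_polynomial_near_of_continuousOn 0 (A + L) f
    hf.continuousOn (ε / 4) (by positivity)
  choose B hB using fun j : ℕ =>
    (isCompact_Icc (a := (0:ℝ)) (b := L)).exists_bound_of_continuousOn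
      ((p.hasseDeriv j).continuous).continuousOn
  have hB0 : ∀ j, 0 ≤ B j := fun j =>
    le_trans (norm_nonneg _) (hB j 0 ⟨le_refl _, hL.le⟩)
  set D := p.natDegree with hD
  set S := ∑ j ∈ Finset.range (D + 1), B j with hS
  have hS0 : 0 ≤ S := Finset.sum_nonneg fun j _ => hB0 j
  set δ := ε / 4 / (S + 1) with hδdef
  have hδ : 0 < δ := by positivity
  -- key polynomial identity
  have hkey : ∀ (ν : Measure ℝ), IsProbabilityMeasure ν → ν (Icc 0 A)ᶜ = 0 → ∀ x : ℝ,
      ∫ y, p.eval (x + y) ∂ν =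
        ∑ j ∈ Finset.range (D + 1), (p.hasseDeriv j).eval x * mom ν j := by
    intro ν hν hνs x
    haveI := hν
    have h1 : ∀ y : ℝ, p.eval (x + y) =
        ∑ j ∈ Finset.range (D + 1), (p.hasseDeriv j).eval x * y ^ j := by
      intro y
      rw [add_comm, ← Polynomial.taylor_eval]
      rw [Polynomial.eval_eq_sum_range'
        (lt_of_le_of_lt (le_of_eq (Polynomial.natDegree_taylor p x)) (Nat.lt_succ_self D))]
      exact Finset.sum_congr rfl fun j _ => by rw [Polynomial.taylor_coeff]
    simp_rw [h1]
    rw [integral_finset_sum _ (fun j _ => (integrable_pow hνs j).const_mul _)]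
    exact Finset.sum_congr rfl fun j _ => integral_const_mul _ _
  -- eventual closeness of moments
  have hev : ∀ᶠ n in atTop, ∀ j ∈ Finset.range (D + 1),
      |mom (μs n) j - mom μ j| < δ := by
    rw [eventually_all_finset]
    intro j _
    filter_upwards [Metric.tendsto_nhds.mp (hmom j) δ hδ] with n hn
    rwa [Real.dist_eq] at hn
  filter_upwards [hev] with n hn x hx
  haveI := hμs n
  rw [Real.dist_eq]
  have hmem : ∀ᵐ y ∂μ, x + y ∈ Icc 0 (A + L) := by
    filter_upwards [ae_mem_of_null_compl hsupp] with y hy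
    exact ⟨add_nonneg hx.1 hy.1, by have := hx.2; have := hy.2; linarith⟩
  have hmemn : ∀ᵐ y ∂(μs n), x + y ∈ Icc 0 (A + L) := by
    filter_upwards [ae_mem_of_null_compl (hsupps n)] with y hy
    exact ⟨add_nonneg hx.1 hy.1, by have := hx.2; have := hy.2; linarith⟩
  have e1 : |(∫ y, f (x + y) ∂μ) - ∫ y, p.eval (x + y) ∂μ| ≤ ε / 4 := by
    rw [← integral_sub (integrable_shift hsupp hf x) (integrable_shift hsupp p.continuous x)]
    apply abs_integral_le
    filter_upwards [hmem] with y hy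
    rw [abs_sub_comm]
    exact (hp _ hy).le
  have e3 : |(∫ y, p.eval (x + y) ∂(μs n)) - ∫ y, f (x + y) ∂(μs n)| ≤ ε / 4 := by
    rw [← integral_sub (integrable_shift (hsupps n) p.continuous x)
      (integrable_shift (hsupps n) hf x)]
    apply abs_integral_le
    filter_upwards [hmemn] with y hy
    exact (hp _ hy).le
  have e2 : |(∫ y, p.eval (x + y) ∂μ) - ∫ y, p.eval (x + y) ∂(μs n)| ≤ ε / 4 := by
    rw [hkey μ ‹_› hsupp x, hkey (μs n) (hμs n) (hsupps n) x, ← Finset.sum_sub_distrib]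
    calc |∑ j ∈ Finset.range (D + 1),
            ((p.hasseDeriv j).eval x * mom μ j - (p.hasseDeriv j).eval x * mom (μs n) j)|
        ≤ ∑ j ∈ Finset.range (D + 1),
            |(p.hasseDeriv j).eval x * mom μ j - (p.hasseDeriv j).eval x * mom (μs n) j| :=
          Finset.abs_sum_le_sum_abs _ _
      _ ≤ ∑ j ∈ Finset.range (D + 1), B j * δ := by
          refine Finset.sum_le_sum fun j hj => ?_
          rw [← mul_sub, abs_mul]
          refine mul_le_mul ?_ ?_ (abs_nonneg _) (hB0 j)
          · simpa using hB j x hx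
          · rw [abs_sub_comm]; exact (hn j hj).le
      _ = S * δ := by rw [← Finset.sum_mul]
      _ ≤ (S + 1) * δ := by nlinarith
      _ = ε / 4 := by rw [hδdef]; field_simp
  have t1 := abs_sub_le (∫ y, f (x + y) ∂μ) (∫ y, p.eval (x + y) ∂μ)
    (∫ y, f (x + y) ∂(μs n))
  have t2 := abs_sub_le (∫ y, p.eval (x + y) ∂μ) (∫ y, p.eval (x + y) ∂(μs n))
    (∫ y, f (x + y) ∂(μs n))
  linarith

lemma tuo_const_mul {F : ℕ → ℝ → ℝ} {g : ℝ → ℝ} {s : Set ℝ} (c : ℝ)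
    (h : TendstoUniformlyOn F g atTop s) :
    TendstoUniformlyOn (fun n x => c * F n x) (fun x => c * g x) atTop s := by
  rw [Metric.tendstoUniformlyOn_iff] at h ⊢
  intro ε hε
  filter_upwards [h (ε / (|c| + 1)) (by positivity)] with n hn x hx
  have h1 := hn x hx
  rw [Real.dist_eq] at h1 ⊢
  have h2 : |c * g x - c * F n x| = |c| * |g x - F n x| := by
    rw [← mul_sub, abs_mul]
  rw [h2]
  calc |c| * |g x - F n x| ≤ |c| * (ε / (|c| + 1)) :=
        mul_le_mul_of_nonneg_left h1.le (abs_nonneg c)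
    _ < (|c| + 1) * (ε / (|c| + 1)) := by
        apply mul_lt_mul_of_pos_right _ (by positivity)
        linarith
    _ = ε := by field_simp

lemma tuo_tsum {s : Set ℝ} (hs : s.Nonempty) {u : ℕ → ℕ → ℝ → ℝ} {U : ℕ → ℝ → ℝ}
    {M : ℕ → ℝ} (hM : Summable M)
    (hu : ∀ k, TendstoUniformlyOn (fun n x => u n k x) (U k) atTop s)
    (hub : ∀ n k x, x ∈ s → |u n k x| ≤ M k)
    (hUb : ∀ k x, x ∈ s → |U k x| ≤ M k) :
    TendstoUniformlyOn (fun n x => ∑' k, u n k x) (fun x => ∑' k, U k x) atTop s := by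
  rw [Metric.tendstoUniformlyOn_iff]
  intro ε hε
  obtain ⟨K, hK⟩ : ∃ K : ℕ, ∑' k, M (k + K) < ε / 4 :=
    ((tendsto_sum_nat_add M).eventually_lt_const (by positivity)).exists
  have hhead : ∀ᶠ n in atTop, ∀ k ∈ Finset.range K, ∀ x ∈ s,
      dist (U k x) (u n k x) < ε / (4 * K + 4) := by
    rw [eventually_all_finset]
    intro k _
    exact Metric.tendstoUniformlyOn_iff.mp (hu k) _ (by positivity)
  filter_upwards [hhead] with n hn x hx
  have hsU : Summable fun k => U k x :=
    hM.of_norm_bounded (fun k => by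
      rw [Real.norm_eq_abs]; exact hUb k x hx)
  have hsu : Summable fun k => u n k x :=
    hM.of_norm_bounded (fun k => by
      rw [Real.norm_eq_abs]; exact hub n k x hx)
  have hMK : Summable fun k => M (k + K) := (summable_nat_add_iff K).mpr hM
  rw [Real.dist_eq, ← Summable.sum_add_tsum_nat_add K hsU, ← Summable.sum_add_tsum_nat_add K hsu]
  have tU : |∑' k, U (k + K) x| ≤ ∑' k, M (k + K) := by
    rw [← Real.norm_eq_abs]
    refine le_trans (norm_tsum_le_tsum_norm ?_) ?_
    · exact hMK.of_nonneg_of_le (fun k => norm_nonneg _)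
        (fun k => by rw [Real.norm_eq_abs]; exact hUb (k + K) x hx)
    · exact Summable.tsum_le_tsum (fun k => by rw [Real.norm_eq_abs]; exact hUb (k + K) x hx)
        (hMK.of_nonneg_of_le (fun k => norm_nonneg _)
          (fun k => by rw [Real.norm_eq_abs]; exact hUb (k + K) x hx)) hMK
  have tu : |∑' k, u n (k + K) x| ≤ ∑' k, M (k + K) := by
    rw [← Real.norm_eq_abs]
    refine le_trans (norm_tsum_le_tsum_norm ?_) ?_
    · exact hMK.of_nonneg_of_le (fun k => norm_nonneg _)
        (fun k => by rw [Real.norm_eq_abs]; exact hub n (k + K) x hx)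
    · exact Summable.tsum_le_tsum (fun k => by rw [Real.norm_eq_abs]; exact hub n (k + K) x hx)
        (hMK.of_nonneg_of_le (fun k => norm_nonneg _)
          (fun k => by rw [Real.norm_eq_abs]; exact hub n (k + K) x hx)) hMK
  have hhd : |∑ k ∈ Finset.range K, U k x - ∑ k ∈ Finset.range K, u n k x| ≤ ε / 4 := by
    rw [← Finset.sum_sub_distrib]
    calc |∑ k ∈ Finset.range K, (U k x - u n k x)|
        ≤ ∑ k ∈ Finset.range K, |U k x - u n k x| := Finset.abs_sum_le_sum_abs _ _
      _ ≤ ∑ _k ∈ Finset.range K, (ε / (4 * K + 4)) := by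
          refine Finset.sum_le_sum fun k hk => ?_
          have := hn k hk x hx
          rw [Real.dist_eq] at this
          exact this.le
      _ = K * (ε / (4 * K + 4)) := by
          rw [Finset.sum_const, Finset.card_range, nsmul_eq_mul]
      _ ≤ ε / 4 := by
          rw [← mul_div_assoc, div_le_div_iff₀ (by positivity) (by norm_num)]
          have hK0 : (0:ℝ) ≤ K := Nat.cast_nonneg K
          nlinarith [hε.le]
  have habs : |(∑ k ∈ Finset.range K, U k x + ∑' k, U (k + K) x) -
      (∑ k ∈ Finset.range K, u n k x + ∑' k, u n (k + K) x)| ≤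
      |∑ k ∈ Finset.range K, U k x - ∑ k ∈ Finset.range K, u n k x| +
      (|∑' k, U (k + K) x| + |∑' k, u n (k + K) x|) := by
    have := abs_sub (∑' k, U (k + K) x) (∑' k, u n (k + K) x)
    have h3 : (∑ k ∈ Finset.range K, U k x + ∑' k, U (k + K) x) -
        (∑ k ∈ Finset.range K, u n k x + ∑' k, u n (k + K) x) =
        (∑ k ∈ Finset.range K, U k x - ∑ k ∈ Finset.range K, u n k x) +
        (∑' k, U (k + K) x - ∑' k, u n (k + K) x) := by ring
    rw [h3]
    exact le_trans (abs_add_le _ _) (by gcongr)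
  calc _ ≤ _ := habs
    _ < ε / 4 + (ε / 4 + ε / 4) := by
        have := lt_of_le_of_lt tU hK
        have := lt_of_le_of_lt tu hK
        -- head ≤ ε/4, tails < ε/4
        linarith
    _ < ε := by linarith

noncomputable def coef (l : ℝ) (k : ℕ) : ℝ := Real.exp (-l) * l ^ k / (k + 1).factorial

lemma coef_nonneg {l : ℝ} (hl : 0 ≤ l) (k : ℕ) : 0 ≤ coef l k := by
  unfold coef
  positivity

noncomputable def Mb (a b l L : ℝ) (k : ℕ) : ℝ :=
  coef l k * (a * Real.exp (|b| * ((k : ℝ) * L + L)))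

lemma exp_split (b L : ℝ) (k : ℕ) :
    Real.exp (|b| * ((k : ℝ) * L + L)) = Real.exp (|b| * L) ^ k * Real.exp (|b| * L) := by
  rw [← Real.exp_nat_mul, ← Real.exp_add]
  congr 1
  ring

lemma Mb_summable {a b l L : ℝ} (ha : 0 ≤ a) (hl : 0 ≤ l) :
    Summable (Mb a b l L) := by
  have hg : Summable (fun k : ℕ =>
      (a * Real.exp (-l) * Real.exp (|b| * L)) *
        ((l * Real.exp (|b| * L)) ^ k / k.factorial)) :=
    (Real.summable_pow_div_factorial (l * Real.exp (|b| * L))).mul_left _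
  refine Summable.of_nonneg_of_le (fun k => ?_) (fun k => ?_) hg
  · unfold Mb
    exact mul_nonneg (coef_nonneg hl k) (mul_nonneg ha (Real.exp_pos _).le)
  · unfold Mb coef
    rw [exp_split]
    have h1 : (0:ℝ) < k.factorial := by exact_mod_cast k.factorial_pos
    have h2 : (k.factorial : ℝ) ≤ ((k+1).factorial : ℝ) := by
      exact_mod_cast Nat.factorial_le (Nat.le_succ k)
    have h3 : Real.exp (-l) * l ^ k / ((k+1).factorial : ℝ) *
        (a * (Real.exp (|b| * L) ^ k * Real.exp (|b| * L))) =
        (a * Real.exp (-l) * Real.exp (|b| * L)) *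
          ((l * Real.exp (|b| * L)) ^ k / ((k+1).factorial : ℝ)) := by
      rw [mul_pow]
      ring
    rw [h3]
    have h4 : (0:ℝ) ≤ (l * Real.exp (|b| * L)) ^ k :=
      pow_nonneg (mul_nonneg hl (Real.exp_pos _).le) k
    have h5 : (l * Real.exp (|b| * L)) ^ k / ((k+1).factorial : ℝ) ≤
        (l * Real.exp (|b| * L)) ^ k / (k.factorial : ℝ) := by
      gcongr
    refine mul_le_mul_of_nonneg_left h5 ?_
    positivity

lemma term_bound {f : ℝ → ℝ} {a b : ℝ} (ha : 0 ≤ a)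
    (hbound : ∀ x, |f x| ≤ a * Real.cosh (b * x))
    {l L : ℝ} (hl : 0 ≤ l)
    {μ : Measure ℝ} [IsProbabilityMeasure μ] (hs : μ (Icc 0 L)ᶜ = 0)
    (k : ℕ) {x : ℝ} (hx : x ∈ Icc 0 L) :
    |coef l k * ∫ y, f (x + y) ∂(convPow μ k)| ≤ Mb a b l L k := by
  haveI := convPow_prob μ k
  have h1 := integral_f_bound ha hbound (convPow_supp hs k) hx.1 hx.2
  rw [abs_mul, abs_of_nonneg (coef_nonneg hl k)]
  exact le_trans (mul_le_mul_of_nonneg_left h1 (coef_nonneg hl k)) (le_of_eq rfl)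

lemma meanFitnessAt_eq {f : ℝ → ℝ} (hf : Continuous f) (l : ℝ) (μ : Measure ℝ)
    [IsProbabilityMeasure μ] (x : ℝ) :
    meanFitnessAt f l μ x = ∑' k, coef l k * ∫ y, f (x + y) ∂(convPow μ k) := by
  unfold meanFitnessAt coef
  refine tsum_congr fun k => ?_
  haveI := convPow_prob μ k
  rw [integral_dirac_conv x hf]

end MFAux

theorem mean_fitness_continuous
    (f : ℝ → ℝ) (hf : Continuous f)
    (a b : ℝ) (ha : 0 < a)
    (hbound : ∀ x, |f x| ≤ a * Real.cosh (b * x))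
    (L l : ℝ) (hL : 0 < L) (hl : 0 < l)
    (ρ : Measure ℝ) (ρs : ℕ → Measure ℝ)
    (hρ : IsProbabilityMeasure ρ) (hρs : ∀ n, IsProbabilityMeasure (ρs n))
    (hsupp : ρ (Set.Icc 0 L)ᶜ = 0) (hsupps : ∀ n, (ρs n) (Set.Icc 0 L)ᶜ = 0)
    (hconv : WeakTendsto ρs ρ) :
    TendstoUniformlyOn (fun n x => meanFitnessAt f l (ρs n) x)
      (meanFitnessAt f l ρ) atTop (Set.Icc 0 L) ∧
    Tendsto (fun n => meanFitness f l (ρs n)) atTop (nhds (meanFitness f l ρ)) := by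
  haveI := hρ
  -- convergence of moments of the base measures
  have hbase : ∀ j, Tendsto (fun n => MFAux.mom (ρs n) j) atTop (nhds (MFAux.mom ρ j)) := by
    intro j
    have hφc : Continuous fun y : ℝ => (max 0 (min y L)) ^ j :=
      (continuous_const.max (continuous_id.min continuous_const)).pow j
    have hφb : ∃ C : ℝ, ∀ y, |(max 0 (min y L)) ^ j| ≤ C := by
      refine ⟨L ^ j, fun y => ?_⟩
      rw [abs_pow]
      refine pow_le_pow_left₀ (abs_nonneg _) ?_ j
      rw [abs_of_nonneg (le_max_left 0 _)]
      exact max_le hL.le (min_le_right y L)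
    have key : ∀ (μ : Measure ℝ), μ (Set.Icc 0 L)ᶜ = 0 →
        ∫ y, (max 0 (min y L)) ^ j ∂μ = MFAux.mom μ j := by
      intro μ hμ
      refine integral_congr_ae ?_
      filter_upwards [MFAux.ae_mem_of_null_compl hμ] with y hy
      rw [min_eq_left hy.2, max_eq_right hy.1]
    have h := hconv _ hφc hφb
    rw [key ρ hsupp] at h
    have he : (fun n => ∫ y, (max 0 (min y L)) ^ j ∂(ρs n)) =
        fun n => MFAux.mom (ρs n) j := funext fun n => key _ (hsupps n)
    rwa [he] at h
  -- convergence of moments of convolution powers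
  have hmomconv : ∀ k j, Tendsto (fun n => MFAux.mom (convPow (ρs n) k) j) atTop
      (nhds (MFAux.mom (convPow ρ k) j)) := by
    intro k
    induction k with
    | zero =>
        intro j
        have hz : ∀ (μ : Measure ℝ), MFAux.mom (convPow μ 0) j = (0:ℝ) ^ j := by
          intro μ
          rw [convPow]
          unfold MFAux.mom
          rw [integral_dirac]
        simp only [hz]
        exact tendsto_const_nhds
    | succ k ih =>
        intro j
        have hrw : ∀ (μ : Measure ℝ), IsProbabilityMeasure μ → μ (Set.Icc 0 L)ᶜ = 0 →
            MFAux.mom (convPow μ (k+1)) j = ∑ i ∈ Finset.range (j+1),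
              (j.choose i : ℝ) * MFAux.mom (convPow μ k) i * MFAux.mom μ (j - i) := by
          intro μ hμ hs
          haveI := hμ
          haveI := MFAux.convPow_prob μ k
          rw [convPow]
          exact MFAux.mom_conv (MFAux.convPow_supp hs k) hs j
        have h1 : (fun n => MFAux.mom (convPow (ρs n) (k+1)) j) =
            fun n => ∑ i ∈ Finset.range (j+1),
              (j.choose i : ℝ) * MFAux.mom (convPow (ρs n) k) i * MFAux.mom (ρs n) (j - i) :=
          funext fun n => hrw _ (hρs n) (hsupps n)
        rw [h1, hrw ρ hρ hsupp]
        exact tendsto_finset_sum _ fun i _ => ((ih i).const_mul _).mul (hbase (j - i))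
  -- uniform convergence of the shifted integrals, for each k
  have hU : ∀ k, TendstoUniformlyOn (fun n x => ∫ y, f (x + y) ∂(convPow (ρs n) k))
      (fun x => ∫ y, f (x + y) ∂(convPow ρ k)) atTop (Set.Icc 0 L) := by
    intro k
    haveI := MFAux.convPow_prob ρ k
    exact MFAux.tendstoUniformlyOn_integral
      (fun n => by haveI := hρs n; exact MFAux.convPow_prob (ρs n) k) hL
      (MFAux.convPow_supp hsupp k)
      (fun n => by haveI := hρs n; exact MFAux.convPow_supp (hsupps n) k)
      (hmomconv k) hf
  have hMsum : Summable (MFAux.Mb a b l L) := MFAux.Mb_summable ha.le hl.le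
  constructor
  · -- uniform convergence of the mean fitness functions
    have h1 : (fun n x => meanFitnessAt f l (ρs n) x) =
        fun n x => ∑' k, MFAux.coef l k * ∫ y, f (x + y) ∂(convPow (ρs n) k) :=
      funext fun n => funext fun x => by
        haveI := hρs n; exact MFAux.meanFitnessAt_eq hf l (ρs n) x
    have h2 : meanFitnessAt f l ρ =
        fun x => ∑' k, MFAux.coef l k * ∫ y, f (x + y) ∂(convPow ρ k) :=
      funext fun x => MFAux.meanFitnessAt_eq hf l ρ x
    rw [h1, h2]
    refine MFAux.tuo_tsum (s := Set.Icc 0 L) ⟨0, ⟨le_refl 0, hL.le⟩⟩ hMsum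
      (fun k => MFAux.tuo_const_mul _ (hU k)) ?_ ?_
    · intro n k x hx
      haveI := hρs n
      exact MFAux.term_bound ha.le hbound hl.le (hsupps n) k hx
    · intro k x hx
      exact MFAux.term_bound ha.le hbound hl.le hsupp k hx
  · -- convergence of the population mean fitness
    have hGs : (fun n => meanFitness f l (ρs n)) =
        fun n => ∑' k, MFAux.coef l k * ∫ y, f y ∂(convPow (ρs n) (k+1)) := rfl
    have hG : meanFitness f l ρ =
        ∑' k, MFAux.coef l k * ∫ y, f y ∂(convPow ρ (k+1)) := rfl
    rw [hGs, hG]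
    refine tendsto_tsum_of_dominated_convergence
      (bound := fun k => MFAux.Mb a b l L k * Real.exp (|b| * L))
      (hMsum.mul_right _) (fun k => ?_) ?_
    · have h0 : (0:ℝ) ∈ Set.Icc (0:ℝ) L := ⟨le_refl 0, hL.le⟩
      have ht := (hU (k+1)).tendsto_at h0
      simp only [zero_add] at ht
      exact ht.const_mul _
    · refine Eventually.of_forall fun n => fun k => ?_
      haveI := hρs n
      haveI := MFAux.convPow_prob (ρs n) (k+1)
      have h1 := MFAux.integral_f_bound ha.le hbound
        (MFAux.convPow_supp (hsupps n) (k+1)) (le_refl (0:ℝ)) hL.le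
      have h2 : (fun y : ℝ => f (0 + y)) = f := funext fun y => by rw [zero_add]
      rw [h2] at h1
      rw [Real.norm_eq_abs, abs_mul, abs_of_nonneg (MFAux.coef_nonneg hl.le k)]
      calc MFAux.coef l k * |∫ y, f y ∂(convPow (ρs n) (k+1))|
          ≤ MFAux.coef l k * (a * Real.exp (|b| * (((k+1 : ℕ) : ℝ) * L + L))) :=
            mul_le_mul_of_nonneg_left h1 (MFAux.coef_nonneg hl.le k)
        _ = MFAux.Mb a b l L k * Real.exp (|b| * L) := by
            unfold MFAux.Mb
            have he : Real.exp (|b| * (((k+1 : ℕ) : ℝ) * L + L)) =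
                Real.exp (|b| * ((k : ℝ) * L + L)) * Real.exp (|b| * L) := by
              rw [← Real.exp_add]
              congr 1
              push_cast
              ring
            rw [he]
            ring
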